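/- For the matrix Riccati equation A'(t) = (1/η)·A(t)·M·A(t) - (γ/2)·Σ with terminal condition A(T) = diag(K,0), where M = (1,k)ᵀ(1,k) and Σ positive semidefinite, any solution satisfies A(t) ⪯ A(T) + (γ/2)·Σ·(T-t) in the Loewner order, for t ∈ [0,T]; hence solutions remain bounded and exist globally on [0,T]. -/

import Mathlib

open Real Set Matrix

/-- Loewner comparison for the matrix Riccati equation of Model B: any C¹ solution with
`A(t) ⪰ 0` on `[0,T]` satisfies `A(t) ⪯ A(T) + (γ/2)(T-t)·Σ`; hence solutions remain
bounded and exist globally on `[0,T]`. -/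
theorem stmt_8 (T η γ k K σ ν ρ : ℝ) (hT : 0 < T) (hη : 0 < η) (hγ : 0 ≤ γ)
    (hk : 0 ≤ k) (hK : 0 ≤ K) (hσ : 0 < σ) (hν : 0 ≤ ν) (hρ : ρ ∈ Icc (-1 : ℝ) 1)
    (M Sig : Matrix (Fin 2) (Fin 2) ℝ)
    (hM : M = !![1, k; k, k ^ 2])
    (hSig : Sig = !![σ ^ 2, ρ * σ * ν; ρ * σ * ν, ν ^ 2])
    (A : ℝ → Matrix (Fin 2) (Fin 2) ℝ)
    (hAsymm : ∀ t ∈ Icc 0 T, (A t).IsSymm)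
    (hApsd : ∀ t ∈ Icc 0 T, (A t).PosSemidef)
    (hA : ∀ t ∈ Icc 0 T, ∀ i j, HasDerivAt (fun s => A s i j)
      (((1 / η) • (A t * M * A t) - (γ / 2) • Sig) i j) t)
    (hAT : A T = !![K, 0; 0, 0]) :
    ∀ t ∈ Icc 0 T, (A T + ((γ / 2) * (T - t)) • Sig - A t).PosSemidef := by
  intro t ht
  obtain ⟨ht0, htT⟩ := ht
  have hsymAt : ∀ s ∈ Icc (0:ℝ) T, ∀ i j, A s j i = A s i j := by
    intro s hs i j
    have h := hAsymm s hs
    have := congrArg (fun m => m i j) h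
    simpa [Matrix.transpose_apply] using this
  rw [posSemidef_iff_dotProduct_mulVec]
  constructor
  · -- Hermitian
    have h1 := hsymAt t ⟨ht0, htT⟩
    ext i j
    simp only [conjTranspose_apply, Matrix.sub_apply, Matrix.add_apply, Matrix.smul_apply,
      smul_eq_mul, star_trivial]
    rw [hSig, hAT]
    fin_cases i <;> fin_cases j <;> simp [h1 0 1] <;> ring
  · intro x
    have hstar : star x = x := funext fun i => rfl
    rw [hstar]
    set q : ℝ := x ⬝ᵥ (Sig *ᵥ x) with hq
    have hq0 : 0 ≤ q := by
      have h1 : (0:ℝ) ≤ 1 - ρ ^ 2 := by nlinarith [hρ.1, hρ.2]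
      rw [hq, hSig]
      simp [dotProduct, mulVec, Fin.sum_univ_two]
      have := mul_nonneg (mul_nonneg h1 (sq_nonneg ν)) (sq_nonneg (x 1))
      nlinarith [sq_nonneg (σ * x 0 + ρ * ν * x 1)]
    -- derivative of the quadratic form
    have hderiv : ∀ s ∈ Icc (0:ℝ) T, HasDerivAt (fun u => x ⬝ᵥ (A u *ᵥ x))
        (x ⬝ᵥ ((((1/η) • (A s * M * A s) - (γ/2) • Sig)) *ᵥ x)) s := by
      intro s hs
      have h00 := (hA s hs 0 0).const_mul (x 0 * x 0)
      have h01 := (hA s hs 0 1).const_mul (x 0 * x 1)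
      have h10 := (hA s hs 1 0).const_mul (x 1 * x 0)
      have h11 := (hA s hs 1 1).const_mul (x 1 * x 1)
      have hcomb := ((h00.add h01).add h10).add h11
      have hfun : (fun u => x ⬝ᵥ (A u *ᵥ x)) =
          fun u => ((x 0 * x 0 * A u 0 0 + x 0 * x 1 * A u 0 1) + x 1 * x 0 * A u 1 0)
            + x 1 * x 1 * A u 1 1 := by
        funext u
        simp only [dotProduct, mulVec, Fin.sum_univ_two]
        ring
      have hval : x ⬝ᵥ ((((1/η) • (A s * M * A s) - (γ/2) • Sig)) *ᵥ x) =
          ((x 0 * x 0 * ((1/η) • (A s * M * A s) - (γ/2) • Sig) 0 0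
            + x 0 * x 1 * ((1/η) • (A s * M * A s) - (γ/2) • Sig) 0 1)
            + x 1 * x 0 * ((1/η) • (A s * M * A s) - (γ/2) • Sig) 1 0)
            + x 1 * x 1 * ((1/η) • (A s * M * A s) - (γ/2) • Sig) 1 1 := by
        simp only [dotProduct, mulVec, Fin.sum_univ_two]
        ring
      rw [hfun, hval]
      exact hcomb
    -- g is monotone on [0,T]
    set g : ℝ → ℝ := fun u => x ⬝ᵥ (A u *ᵥ x) + (γ/2) * q * u with hgdef
    have hg : ∀ s ∈ Icc (0:ℝ) T,
        HasDerivAt g ((1/η) * (x ⬝ᵥ ((A s * M * A s) *ᵥ x))) s := by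
      intro s hs
      have h1 := (hderiv s hs).add ((hasDerivAt_id s).const_mul ((γ/2) * q))
      have h2 : x ⬝ᵥ ((((1/η) • (A s * M * A s) - (γ/2) • Sig)) *ᵥ x)
          = (1/η) * (x ⬝ᵥ ((A s * M * A s) *ᵥ x)) - (γ/2) * q := by
        rw [hq]
        simp [sub_mulVec, smul_mulVec, dotProduct_sub, dotProduct_smul, smul_eq_mul]
        ring
      have h3 : x ⬝ᵥ ((((1/η) • (A s * M * A s) - (γ/2) • Sig)) *ᵥ x) + (γ/2) * q * 1
          = (1/η) * (x ⬝ᵥ ((A s * M * A s) *ᵥ x)) := by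
        rw [h2]; ring
      rw [← h3]
      exact h1
    have hgnonneg : ∀ s ∈ Icc (0:ℝ) T, 0 ≤ (1/η) * (x ⬝ᵥ ((A s * M * A s) *ᵥ x)) := by
      intro s hs
      have h10 := hsymAt s hs 1 0
      have hquad : x ⬝ᵥ ((A s * M * A s) *ᵥ x) =
          ((A s 0 0 * x 0 + A s 0 1 * x 1) + k * (A s 0 1 * x 0 + A s 1 1 * x 1)) ^ 2 := by
        simp [hM, Matrix.mul_apply, mulVec, dotProduct, Fin.sum_univ_two, h10]
        ring
      rw [hquad]
      positivity
    have hmono : MonotoneOn g (Icc 0 T) := by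
      apply monotoneOn_of_deriv_nonneg (convex_Icc 0 T)
      · intro s hs
        exact (hg s hs).continuousAt.continuousWithinAt
      · intro s hs
        rw [interior_Icc] at hs
        exact ((hg s (Ioo_subset_Icc_self hs)).differentiableAt).differentiableWithinAt
      · intro s hs
        rw [interior_Icc] at hs
        rw [(hg s (Ioo_subset_Icc_self hs)).deriv]
        exact hgnonneg s (Ioo_subset_Icc_self hs)
    have hle : g t ≤ g T := hmono ⟨ht0, htT⟩ ⟨le_of_lt hT, le_refl T⟩ htT
    have hexp : x ⬝ᵥ ((A T + ((γ / 2) * (T - t)) • Sig - A t) *ᵥ x)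
        = x ⬝ᵥ (A T *ᵥ x) + ((γ / 2) * (T - t)) * q - x ⬝ᵥ (A t *ᵥ x) := by
      rw [hq]
      simp [sub_mulVec, add_mulVec, smul_mulVec, dotProduct_sub, dotProduct_add,
        dotProduct_smul, smul_eq_mul]
      ring
    rw [hexp]
    simp only [hgdef] at hle
    nlinarith [hle]
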